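/- Let X be any set equipped with the trivial action of the group of finitary permutations of A (π • x = x for all x). Then: (i) every function f : A → X supported by a finite set S ⊆ A is constant on A ∖ S, and hence has finite image; (ii) every finitely supported function g : X → A has finite image. Consequently, if X is infinite there is neither a finitely supported injection from A into X nor a finitely supported surjection from X onto A (and vice versa). -/

import Mathlib

open Pointwise

/-- The group of finitary permutations of the set `A` of atoms: bijections of `A`
whose set of non-fixed points is finite. -/
def FinPerm (A : Type*) : Subgroup (Equiv.Perm A) where
  carrier := {π : Equiv.Perm A | {a : A | π a ≠ a}.Finite}
  one_mem' := by simp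
  mul_mem' := by
    intro π σ hπ hσ
    refine Set.Finite.subset (Set.Finite.union hπ hσ) ?_
    intro a ha
    simp only [Set.mem_setOf_eq, Set.mem_union] at *
    by_contra h
    push_neg at h
    obtain ⟨h1, h2⟩ := h
    exact ha (by rw [Equiv.Perm.mul_apply, h2, h1])
  inv_mem' := by
    intro π hπ
    refine Set.Finite.subset hπ ?_
    intro a ha
    simp only [Set.mem_setOf_eq] at *
    intro h
    exact ha (π.injective (by rw [← Equiv.Perm.mul_apply, mul_inv_cancel, Equiv.Perm.one_apply, h]))

/-- An element `x` is finitely supported if some finite set of atoms supports it. -/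
def FinSupp (A : Type*) {X : Type*} [SMul (FinPerm A) X] (x : X) : Prop :=
  ∃ S : Finset A, MulAction.Supports (FinPerm A) (S : Set A) x

/-- The least support of an element: the intersection of all finite sets of atoms
supporting it. -/
def supp (A : Type*) {X : Type*} [SMul (FinPerm A) X] (x : X) : Set A :=
  ⋂₀ {S : Set A | S.Finite ∧ MulAction.Supports (FinPerm A) S x}

/-- A set `S` of atoms supports a function `f` if `f (π • x) = π • f x` for every
finitary permutation `π` fixing `S` pointwise. -/
def SuppFun (A : Type*) {X Y : Type*} [SMul (FinPerm A) X] [SMul (FinPerm A) Y]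
    (S : Set A) (f : X → Y) : Prop :=
  ∀ π : FinPerm A, (∀ a ∈ S, π • a = a) → ∀ x, f (π • x) = π • f x

/-- A set `S` of atoms supports a function `f` between the subsets `X` and `Y` if, for
every finitary permutation `π` fixing `S` pointwise and every `x ∈ X`, we have
`π • x ∈ X`, `π • f x ∈ Y` and `f (π • x) = π • f x`. -/
def SuppFunOn (A : Type*) {U V : Type*} [SMul (FinPerm A) U] [SMul (FinPerm A) V]
    (S : Set A) (X : Set U) (Y : Set V) (f : U → V) : Prop :=
  ∀ π : FinPerm A, (∀ a ∈ S, π • a = a) →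
    ∀ x ∈ X, π • x ∈ X ∧ π • f x ∈ Y ∧ f (π • x) = π • f x

/-- `℘_fs(X)`: the finitely supported subsets of the set `X`. -/
def Pfs (A : Type*) {U : Type*} [SMul (FinPerm A) U] (X : Set U) : Set (Set U) :=
  {Z : Set U | Z ⊆ X ∧ FinSupp A Z}


theorem swap_mem_finPerm {A : Type*} [DecidableEq A] (a b : A) :
    Equiv.swap a b ∈ FinPerm A := by
  refine Set.Finite.subset ((Set.finite_singleton b).insert a) ?_
  intro c hc
  simp only [Set.mem_setOf_eq] at hc
  by_contra h
  simp only [Set.mem_insert_iff, Set.mem_singleton_iff] at h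
  push_neg at h
  exact hc (Equiv.swap_apply_of_ne_of_ne h.1 h.2)

theorem finPerm_smul {A : Type*} (π : FinPerm A) (a : A) : π • a = π.val a := rfl

/-- let `X` carry the trivial action of the finitary permutations of `A`.
(i) Every function `f : A → X` supported by a finite set `S` of atoms is constant on
    `A ∖ S` and has finite image;
(ii) every finitely supported function `g : X → A` has finite image.
Consequently, if `X` is infinite there is neither a finitely supported injection from
`A` into `X` nor a finitely supported surjection from `X` onto `A`, and vice versa
(no finitely supported injection from `X` into `A`, no finitely supported surjection
from `A` onto `X`). -/
theorem trivial_action_functions_finite_image {A X : Type*} [Infinite A] :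
    (∀ (f : A → X) (S : Finset A),
      (∀ π : FinPerm A, (∀ a ∈ (S : Set A), π • a = a) → ∀ a : A, f (π • a) = f a) →
      (∀ a ∉ S, ∀ b ∉ S, f a = f b) ∧ (Set.range f).Finite) ∧
    (∀ (g : X → A) (S : Finset A),
      (∀ π : FinPerm A, (∀ a ∈ (S : Set A), π • a = a) → ∀ x : X, π • g x = g x) →
      (Set.range g).Finite) ∧
    (Infinite X →
      (¬ ∃ (f : A → X) (S : Finset A), Function.Injective f ∧
        (∀ π : FinPerm A, (∀ a ∈ (S : Set A), π • a = a) → ∀ a : A, f (π • a) = f a)) ∧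
      (¬ ∃ (g : X → A) (S : Finset A), Function.Surjective g ∧
        (∀ π : FinPerm A, (∀ a ∈ (S : Set A), π • a = a) → ∀ x : X, π • g x = g x)) ∧
      (¬ ∃ (g : X → A) (S : Finset A), Function.Injective g ∧
        (∀ π : FinPerm A, (∀ a ∈ (S : Set A), π • a = a) → ∀ x : X, π • g x = g x)) ∧
      (¬ ∃ (f : A → X) (S : Finset A), Function.Surjective f ∧
        (∀ π : FinPerm A, (∀ a ∈ (S : Set A), π • a = a) → ∀ a : A, f (π • a) = f a))) := by
  classical
  have key1 : ∀ (f : A → X) (S : Finset A),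
      (∀ π : FinPerm A, (∀ a ∈ (S : Set A), π • a = a) → ∀ a : A, f (π • a) = f a) →
      (∀ a ∉ S, ∀ b ∉ S, f a = f b) ∧ (Set.range f).Finite := by
    intro f S hf
    have const : ∀ a ∉ S, ∀ b ∉ S, f a = f b := by
      intro a ha b hb
      by_cases hab : a = b
      · rw [hab]
      · have hmem := swap_mem_finPerm a b
        have := hf ⟨Equiv.swap a b, hmem⟩ ?_ b
        · rw [finPerm_smul] at this
          simpa [Equiv.swap_apply_right] using this
        · intro c hc
          rw [finPerm_smul]
          exact Equiv.swap_apply_of_ne_of_ne (fun h => ha (h ▸ hc)) (fun h => hb (h ▸ hc))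
    refine ⟨const, ?_⟩
    obtain ⟨a₀, ha₀⟩ := S.exists_notMem
    have : Set.range f ⊆ f '' (S : Set A) ∪ {f a₀} := by
      rintro _ ⟨a, rfl⟩
      by_cases ha : a ∈ S
      · exact Or.inl ⟨a, ha, rfl⟩
      · exact Or.inr (const a ha a₀ ha₀)
    exact Set.Finite.subset ((S.finite_toSet.image f).union (Set.finite_singleton _)) this
  have key2 : ∀ (g : X → A) (S : Finset A),
      (∀ π : FinPerm A, (∀ a ∈ (S : Set A), π • a = a) → ∀ x : X, π • g x = g x) →
      (Set.range g).Finite := by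
    intro g S hg
    have : Set.range g ⊆ (S : Set A) := by
      rintro _ ⟨x, rfl⟩
      by_contra hx
      obtain ⟨b, hb⟩ := (S ∪ {g x}).exists_notMem
      simp only [Finset.mem_union, Finset.mem_singleton, not_or] at hb
      have hmem := swap_mem_finPerm (g x) b
      have := hg ⟨Equiv.swap (g x) b, hmem⟩ ?_ x
      · rw [finPerm_smul, Equiv.swap_apply_left] at this
        exact hb.2 this
      · intro c hc
        rw [finPerm_smul]
        exact Equiv.swap_apply_of_ne_of_ne (fun h => hx (h ▸ hc)) (fun h => hb.1 (h ▸ hc))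
    exact Set.Finite.subset S.finite_toSet this
  refine ⟨key1, key2, fun hX => ⟨?_, ?_, ?_, ?_⟩⟩
  · rintro ⟨f, S, hinj, hsupp⟩
    exact Set.infinite_range_of_injective hinj ((key1 f S hsupp).2)
  · rintro ⟨g, S, hsurj, hsupp⟩
    have := key2 g S hsupp
    rw [Set.range_eq_univ.mpr hsurj] at this
    exact Set.infinite_univ this
  · rintro ⟨g, S, hinj, hsupp⟩
    exact Set.infinite_range_of_injective hinj (key2 g S hsupp)
  · rintro ⟨f, S, hsurj, hsupp⟩
    have := (key1 f S hsupp).2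
    rw [Set.range_eq_univ.mpr hsurj] at this
    exact Set.infinite_univ this
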